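/- Let (x̄,λ̄) be a solution of the KKT system ∇_xL(x,λ) = 0, λ ∈ ∂θ(Φ(x)) for the ENLP, and assume the second-order sufficient condition holds: ⟨∇²_{xx}L(x̄,λ̄)w, w⟩ + 2θ_{K,B}(∇Φ(x̄)w) > 0 for every w ∈ ℝ^n \ {0} with ∇Φ(x̄)w ∈ K* + rge B. Then there exist ε > 0 and ℓ > 0 such that the quadratic growth estimate φ(x) ≥ φ(x̄) + ℓ‖x − x̄‖² holds for all x ∈ B_ε(x̄), where φ := φ₀ + θ∘Φ; in particular, x̄ is a strict local minimizer of the ENLP. -/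

import Mathlib

open Filter Topology Metric Set Pointwise
open scoped RealInnerProductSpace

noncomputable section

/-- Euclidean space ℝ^k. -/
abbrev Evec (k : ℕ) : Type := EuclideanSpace ℝ (Fin k)

/-- The Bouligand tangent cone to `Ω` at `z`: limits of `α_k (z_k - z)` with
`z_k → z` in `Ω` and `α_k ≥ 0`. -/
def bTangentCone {F : Type*} [NormedAddCommGroup F] [NormedSpace ℝ F]
    (Ω : Set F) (z : F) : Set F :=
  {w | ∃ (zs : ℕ → F) (a : ℕ → ℝ), (∀ k, zs k ∈ Ω) ∧ (∀ k, 0 ≤ a k) ∧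
    Tendsto zs atTop (𝓝 z) ∧ Tendsto (fun k => a k • (zs k - z)) atTop (𝓝 w)}

/-- Graph of a set-valued mapping. -/
def svGraph {A B : Type*} (F : A → Set B) : Set (A × B) := {p | p.2 ∈ F p.1}

/-- Graphical derivative of a set-valued mapping at `(z, w)` in direction `u`. -/
def gDeriv {A B : Type*} [NormedAddCommGroup A] [NormedSpace ℝ A]
    [NormedAddCommGroup B] [NormedSpace ℝ B]
    (F : A → Set B) (z : A) (w : B) (u : A) : Set B :=
  {v | (u, v) ∈ bTangentCone (svGraph F) (z, w)}

/-- A convex polyhedral set: a finite intersection of closed half-spaces. -/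
def IsPolyhedral {k : ℕ} (Y : Set (Evec k)) : Prop :=
  ∃ (p : ℕ) (b : Fin p → Evec k) (c : Fin p → ℝ), Y = {y | ∀ i, ⟪b i, y⟫ ≤ c i}

/-- The piecewise linear-quadratic penalty θ_{Y,B}. -/
def thetaY {k : ℕ} (Y : Set (Evec k)) (B : Evec k →L[ℝ] Evec k) (u : Evec k) : EReal :=
  ⨆ y ∈ Y, ((⟪y, u⟫ - (1 / 2) * ⟪y, B y⟫ : ℝ) : EReal)

/-- Subdifferential of convex analysis of an extended-real-valued function. -/
def subdiff {k : ℕ} (θ : Evec k → EReal) (z : Evec k) : Set (Evec k) :=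
  {v | ∀ u, θ z + ((⟪v, u - z⟫ : ℝ) : EReal) ≤ θ u}

/-- Polar cone. -/
def polarCone {k : ℕ} (K : Set (Evec k)) : Set (Evec k) :=
  {v | ∀ w ∈ K, ⟪v, w⟫ ≤ 0}

/-- Normal cone of convex analysis. -/
def convNormalCone {k : ℕ} (Ω : Set (Evec k)) (z : Evec k) : Set (Evec k) :=
  {v | ∀ w ∈ Ω, ⟪v, w - z⟫ ≤ 0}

/-- The critical cone K = T_Y(lmo) ∩ {zo - Blmo}^⊥. -/
def critCone {k : ℕ} (Y : Set (Evec k)) (B : Evec k →L[ℝ] Evec k)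
    (zo lmo : Evec k) : Set (Evec k) :=
  bTangentCone Y lmo ∩ {w | ⟪zo - B lmo, w⟫ = 0}

/-- Calmness of a set-valued mapping at a graph point. -/
def Calm {A B : Type*} [NormedAddCommGroup A] [NormedAddCommGroup B]
    (F : A → Set B) (zo : A) (wo : B) : Prop :=
  ∃ ℓ : ℝ, 0 ≤ ℓ ∧ ∃ U ∈ 𝓝 zo, ∃ V ∈ 𝓝 wo,
    ∀ z ∈ U, ∀ w ∈ F z ∩ V, ∃ w' ∈ F zo, ‖w - w'‖ ≤ ℓ * ‖z - zo‖

/-- Isolated calmness of a set-valued mapping at a graph point. -/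
def IsolCalm {A B : Type*} [NormedAddCommGroup A] [NormedAddCommGroup B]
    (F : A → Set B) (zo : A) (wo : B) : Prop :=
  ∃ ℓ : ℝ, 0 ≤ ℓ ∧ ∃ U ∈ 𝓝 zo, ∃ V ∈ 𝓝 wo,
    ∀ z ∈ U, ∀ w ∈ F z ∩ V, ‖w - wo‖ ≤ ℓ * ‖z - zo‖

/-- Robust isolated calmness of a set-valued mapping at a graph point. -/
def RobIsolCalm {A B : Type*} [NormedAddCommGroup A] [NormedAddCommGroup B]
    (F : A → Set B) (zo : A) (wo : B) : Prop :=
  ∃ ℓ : ℝ, 0 ≤ ℓ ∧ ∃ U ∈ 𝓝 zo, ∃ V ∈ 𝓝 wo,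
    (∀ z ∈ U, ∀ w ∈ F z ∩ V, ‖w - wo‖ ≤ ℓ * ‖z - zo‖) ∧
    ∀ z ∈ U, (F z ∩ V).Nonempty

/-- Lipschitz-like (Aubin) property of a set-valued mapping around a graph point. -/
def LipLike {A B : Type*} [NormedAddCommGroup A] [NormedAddCommGroup B]
    (F : A → Set B) (zo : A) (wo : B) : Prop :=
  ∃ ℓ : ℝ, 0 ≤ ℓ ∧ ∃ U ∈ 𝓝 zo, ∃ V ∈ 𝓝 wo,
    ∀ z ∈ U, ∀ z' ∈ U, ∀ w ∈ F z' ∩ V, ∃ w' ∈ F z, ‖w - w'‖ ≤ ℓ * ‖z' - z‖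

/-! ### The general variational system -/

/-- Ψ(x,λ) = f(x) + ∇Φ(x)*λ. -/
def Psi {n m : ℕ} (f : Evec n → Evec n) (Φ : Evec n → Evec m)
    (x : Evec n) (lam : Evec m) : Evec n :=
  f x + ContinuousLinearMap.adjoint (fderiv ℝ Φ x) lam

/-- Lagrange multipliers Λ(xo) of the variational system. -/
def LagMult {n m : ℕ} (Y : Set (Evec m)) (B : Evec m →L[ℝ] Evec m)
    (f : Evec n → Evec n) (Φ : Evec n → Evec m) (xo : Evec n) : Set (Evec m) :=
  {lam | Psi f Φ xo lam = 0 ∧ lam ∈ subdiff (thetaY Y B) (Φ xo)}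

/-- Solution map of the canonically perturbed variational system. -/
def SolMap {n m : ℕ} (Y : Set (Evec m)) (B : Evec m →L[ℝ] Evec m)
    (f : Evec n → Evec n) (Φ : Evec n → Evec m) :
    Evec n × Evec m → Set (Evec n × Evec m) :=
  fun p => {q | Psi f Φ q.1 q.2 = p.1 ∧ q.2 ∈ subdiff (thetaY Y B) (Φ q.1 + p.2)}

/-- Multiplier map associated with xo. -/
def MultMap {n m : ℕ} (Y : Set (Evec m)) (B : Evec m →L[ℝ] Evec m)
    (f : Evec n → Evec n) (Φ : Evec n → Evec m) (xo : Evec n) :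
    Evec n × Evec m → Set (Evec m) :=
  fun p => {lam | Psi f Φ xo lam = p.1 ∧ lam ∈ subdiff (thetaY Y B) (Φ xo + p.2)}

/-- lmo is a critical Lagrange multiplier for the variational system. -/
def IsCriticalMult {n m : ℕ} (Y : Set (Evec m)) (B : Evec m →L[ℝ] Evec m)
    (f : Evec n → Evec n) (Φ : Evec n → Evec m) (xo : Evec n) (lmo : Evec m) : Prop :=
  ∃ ξ : Evec n, ξ ≠ 0 ∧
    ∃ η ∈ gDeriv (subdiff (thetaY Y B)) (Φ xo) lmo (fderiv ℝ Φ xo ξ),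
      fderiv ℝ (fun x => Psi f Φ x lmo) xo ξ +
        ContinuousLinearMap.adjoint (fderiv ℝ Φ xo) η = 0

/-- lmo is a noncritical Lagrange multiplier for the variational system. -/
def IsNoncriticalMult {n m : ℕ} (Y : Set (Evec m)) (B : Evec m →L[ℝ] Evec m)
    (f : Evec n → Evec n) (Φ : Evec n → Evec m) (xo : Evec n) (lmo : Evec m) : Prop :=
  ∀ ξ : Evec n, ∀ η ∈ gDeriv (subdiff (thetaY Y B)) (Φ xo) lmo (fderiv ℝ Φ xo ξ),
    fderiv ℝ (fun x => Psi f Φ x lmo) xo ξ +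
      ContinuousLinearMap.adjoint (fderiv ℝ Φ xo) η = 0 → ξ = 0

/-- `u` is the proximal point of `θ` at `z`. -/
def IsProxPt {k : ℕ} (θ : Evec k → EReal) (z u : Evec k) : Prop :=
  ∀ w, θ u + ((1 / 2 * ‖z - u‖ ^ 2 : ℝ) : EReal) ≤ θ w + ((1 / 2 * ‖z - w‖ ^ 2 : ℝ) : EReal)

/-! ### ENLP -/

/-- The Lagrangian of the ENLP. -/
def Lag {n m : ℕ} (B : Evec m →L[ℝ] Evec m) (φ₀ : Evec n → ℝ) (Φ : Evec n → Evec m)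
    (x : Evec n) (lam : Evec m) : ℝ :=
  φ₀ x + ⟪Φ x, lam⟫ - (1 / 2) * ⟪lam, B lam⟫

/-- The essential objective φ = φ₀ + θ∘Φ of the ENLP. -/
def enlpPhi {n m : ℕ} (Y : Set (Evec m)) (B : Evec m →L[ℝ] Evec m)
    (φ₀ : Evec n → ℝ) (Φ : Evec n → Evec m) (x : Evec n) : EReal :=
  ((φ₀ x : ℝ) : EReal) + thetaY Y B (Φ x)

/-- Lagrange multipliers of the ENLP KKT system. -/
def LagMultCom {n m : ℕ} (Y : Set (Evec m)) (B : Evec m →L[ℝ] Evec m)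
    (φ₀ : Evec n → ℝ) (Φ : Evec n → Evec m) (xo : Evec n) : Set (Evec m) :=
  {lam | gradient (fun x => Lag B φ₀ Φ x lam) xo = 0 ∧
    lam ∈ subdiff (thetaY Y B) (Φ xo)}

/-- Solution map of the canonically perturbed KKT system of the ENLP. -/
def SKKT {n m : ℕ} (Y : Set (Evec m)) (B : Evec m →L[ℝ] Evec m)
    (φ₀ : Evec n → ℝ) (Φ : Evec n → Evec m) :
    Evec n × Evec m → Set (Evec n × Evec m) :=
  fun p => {q | gradient (fun x => Lag B φ₀ Φ x q.2) q.1 = p.1 ∧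
    q.2 ∈ subdiff (thetaY Y B) (Φ q.1 + p.2)}

/-- The Hessian ∇²_{xx}L(xo,lmo) as a continuous linear map. -/
def hessL {n m : ℕ} (B : Evec m →L[ℝ] Evec m) (φ₀ : Evec n → ℝ) (Φ : Evec n → Evec m)
    (xo : Evec n) (lmo : Evec m) : Evec n →L[ℝ] Evec n :=
  fderiv ℝ (fun x => gradient (fun x' => Lag B φ₀ Φ x' lmo) x) xo

/-- lmo is a noncritical multiplier of the KKT system of the ENLP. -/
def IsNoncriticalENLP {n m : ℕ} (Y : Set (Evec m)) (B : Evec m →L[ℝ] Evec m)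
    (φ₀ : Evec n → ℝ) (Φ : Evec n → Evec m) (xo : Evec n) (lmo : Evec m) : Prop :=
  ∀ ξ : Evec n, ∀ η ∈ gDeriv (subdiff (thetaY Y B)) (Φ xo) lmo (fderiv ℝ Φ xo ξ),
    hessL B φ₀ Φ xo lmo ξ + ContinuousLinearMap.adjoint (fderiv ℝ Φ xo) η = 0 → ξ = 0

/-- The second-order sufficient condition for the ENLP at (xo,lmo). -/
def SOSC {n m : ℕ} (Y : Set (Evec m)) (B : Evec m →L[ℝ] Evec m)
    (φ₀ : Evec n → ℝ) (Φ : Evec n → Evec m) (xo : Evec n) (lmo : Evec m) : Prop :=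
  ∀ w : Evec n, w ≠ 0 →
    fderiv ℝ Φ xo w ∈ polarCone (critCone Y B (Φ xo) lmo) + Set.range (⇑B) →
    0 < ((⟪hessL B φ₀ Φ xo lmo w, w⟫ : ℝ) : EReal) +
      2 * thetaY (critCone Y B (Φ xo) lmo) B (fderiv ℝ Φ xo w)

/-- xo is a local optimal solution of the ENLP. -/
def IsLocalOptENLP {n m : ℕ} (Y : Set (Evec m)) (B : Evec m →L[ℝ] Evec m)
    (φ₀ : Evec n → ℝ) (Φ : Evec n → Evec m) (xo : Evec n) : Prop :=
  ∃ ε > (0 : ℝ), ∀ x ∈ Metric.closedBall xo ε,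
    enlpPhi Y B φ₀ Φ xo ≤ enlpPhi Y B φ₀ Φ x

/-- The second subderivative d²φ(xo,vo)(wo). -/
def secondSubderiv {k : ℕ} (φ : Evec k → EReal) (xo vo wo : Evec k) : EReal :=
  Filter.liminf
    (fun p : ℝ × Evec k =>
      ((2 / p.1 ^ 2 : ℝ) : EReal) *
        (φ (xo + p.1 • p.2) - φ xo - ((p.1 * ⟪vo, p.2⟫ : ℝ) : EReal)))
    ((𝓝[>] (0 : ℝ)) ×ˢ 𝓝 wo)

/-- The perturbed objective of the ENLP. -/
def pObj {n m : ℕ} (Y : Set (Evec m)) (B : Evec m →L[ℝ] Evec m)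
    (φ₀ : Evec n → ℝ) (Φ : Evec n → Evec m) (p : Evec n × Evec m) (x : Evec n) : EReal :=
  ((φ₀ x - ⟪p.1, x⟫ : ℝ) : EReal) + thetaY Y B (Φ x + p.2)

/-- xo is a fully stable local optimal solution of the ENLP. -/
def FullyStable {n m : ℕ} (Y : Set (Evec m)) (B : Evec m →L[ℝ] Evec m)
    (φ₀ : Evec n → ℝ) (Φ : Evec n → Evec m) (xo : Evec n) : Prop :=
  ∃ γ > (0 : ℝ), ∃ U ∈ 𝓝 (0 : Evec n), ∃ W ∈ 𝓝 (0 : Evec m),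
    ∃ (g : Evec n × Evec m → Evec n) (mg : Evec n × Evec m → ℝ) (ℓ : ℝ), 0 ≤ ℓ ∧
      g (0, 0) = xo ∧
      (∀ p ∈ U ×ˢ W,
        {x : Evec n | ‖x - xo‖ ≤ γ ∧ ∀ x', ‖x' - xo‖ ≤ γ →
          pObj Y B φ₀ Φ p x ≤ pObj Y B φ₀ Φ p x'} = {g p}) ∧
      (∀ p ∈ U ×ˢ W, ∀ q ∈ U ×ˢ W, ‖g p - g q‖ ≤ ℓ * ‖p - q‖) ∧
      (∀ p ∈ U ×ˢ W,
        sInf (pObj Y B φ₀ Φ p '' {x | ‖x - xo‖ ≤ γ}) = ((mg p : ℝ) : EReal)) ∧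
      (∀ p ∈ U ×ˢ W, ∀ q ∈ U ×ˢ W, |mg p - mg q| ≤ ℓ * ‖p - q‖)

/-! ### Normal cones and coderivatives on products -/

/-- Regular (Fréchet) normal cone to a subset of ℝ^a × ℝ^b. -/
def regNormalCone2 {a b : ℕ} (Ω : Set (Evec a × Evec b)) (z : Evec a × Evec b) :
    Set (Evec a × Evec b) :=
  {v | ∀ ε > (0 : ℝ), ∃ δ > (0 : ℝ), ∀ w ∈ Ω, ‖w - z‖ < δ →
    ⟪v.1, w.1 - z.1⟫ + ⟪v.2, w.2 - z.2⟫ ≤ ε * ‖w - z‖}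

/-- Limiting (Mordukhovich) normal cone to a subset of ℝ^a × ℝ^b. -/
def limNormalCone2 {a b : ℕ} (Ω : Set (Evec a × Evec b)) (z : Evec a × Evec b) :
    Set (Evec a × Evec b) :=
  {v | ∃ (zs vs : ℕ → Evec a × Evec b), (∀ k, zs k ∈ Ω) ∧
    (∀ k, vs k ∈ regNormalCone2 Ω (zs k)) ∧
    Tendsto zs atTop (𝓝 z) ∧ Tendsto vs atTop (𝓝 v)}

/-- Coderivative of a set-valued mapping between Euclidean spaces. -/
def coDeriv {a b : ℕ} (F : Evec a → Set (Evec b)) (z : Evec a) (w : Evec b)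
    (v : Evec b) : Set (Evec a) :=
  {u | (u, -v) ∈ limNormalCone2 (svGraph F) (z, w)}

end

/-! ### Auxiliary machinery for the proof -/

section FarkasAux

variable {E : Type*} [NormedAddCommGroup E] [InnerProductSpace ℝ E] [FiniteDimensional ℝ E]

/-- The conical hull of a finite family. -/
def coneOf {ι : Type*} [Fintype ι] (g : ι → E) : Set E :=
  {x | ∃ lam : ι → ℝ, (∀ i, 0 ≤ lam i) ∧ x = ∑ i, lam i • g i}

lemma sum_extend {ι : Type*} [Fintype ι] [DecidableEq ι] (S : Finset ι)
    (lam : {i // i ∈ S} → ℝ) (f : ι → E) :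
    ∑ i : {i // i ∈ S}, lam i • f i
      = ∑ i : ι, (if h : i ∈ S then lam ⟨i, h⟩ else 0) • f i := by
  have h1 : ∑ i : {i // i ∈ S}, lam i • f i
      = ∑ i : {i // i ∈ S}, (fun j => (if h : j ∈ S then lam ⟨j, h⟩ else 0) • f j) (i : ι) := by
    refine Finset.sum_congr rfl fun i _ => ?_
    simp only [dif_pos i.2]
  rw [h1, Finset.sum_coe_sort S (fun j => (if h : j ∈ S then lam ⟨j, h⟩ else 0) • f j)]
  refine Finset.sum_subset (Finset.subset_univ S) fun i _ hi => ?_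
  rw [dif_neg hi, zero_smul]

lemma caratheodory_cone_aux {ι : Type*} [Fintype ι] [DecidableEq ι] (g : ι → E) :
    ∀ (N : ℕ) (lam : ι → ℝ), (Finset.univ.filter (fun i => lam i ≠ 0)).card ≤ N →
      (∀ i, 0 ≤ lam i) →
      ∃ S : Finset ι, LinearIndependent ℝ (fun i : {i // i ∈ S} => g i) ∧
        ∃ lam' : ι → ℝ, (∀ i, 0 ≤ lam' i) ∧ (∀ i ∉ S, lam' i = 0) ∧
          ∑ i, lam' i • g i = ∑ i, lam i • g i := by
  intro N
  induction N with
  | zero =>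
    intro lam hcard hpos
    have hall : ∀ i, lam i = 0 := by
      intro i
      by_contra hne
      have : i ∈ Finset.univ.filter (fun i => lam i ≠ 0) := by
        simp [hne]
      have := Finset.card_pos.mpr ⟨i, this⟩
      omega
    refine ⟨∅, ?_, lam, hpos, fun i _ => hall i, rfl⟩
    have : IsEmpty {i // i ∈ (∅ : Finset ι)} := by
      exact ⟨fun x => Finset.notMem_empty x.1 x.2⟩
    exact linearIndependent_empty_type
  | succ N ih =>
    intro lam hcard hpos
    set s : Finset ι := Finset.univ.filter (fun i => lam i ≠ 0) with hs
    by_cases hli : LinearIndependent ℝ (fun i : {i // i ∈ s} => g i)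
    · refine ⟨s, hli, lam, hpos, fun i hi => ?_, rfl⟩
      by_contra hne
      exact hi (by simp [hs, hne])
    · obtain ⟨c, hc0, j₀, hj₀⟩ := Fintype.not_linearIndependent_iff.mp hli
      -- extend c to ι
      set μ : ι → ℝ := fun i => if h : i ∈ s then c ⟨i, h⟩ else 0 with hμ
      have hμsum : ∑ i, μ i • g i = 0 := by
        simp only [hμ]
        rw [← sum_extend s c g]
        exact hc0
      have hμsupp : ∀ i ∉ s, μ i = 0 := fun i hi => by simp [hμ, dif_neg hi]
      have hμne : ∃ i, 0 < μ i ∨ μ i < 0 := by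
        refine ⟨j₀, ?_⟩
        have : μ (j₀ : ι) = c j₀ := by simp [hμ, dif_pos j₀.2]
        rcases lt_or_gt_of_ne hj₀ with h | h
        · right; rw [this]; exact h
        · left; rw [this]; exact h
      -- wlog some positive entry
      obtain ⟨ν, hνsum, hνsupp, i₁, hi₁⟩ :
          ∃ ν : ι → ℝ, (∑ i, ν i • g i = 0) ∧ (∀ i ∉ s, ν i = 0) ∧ ∃ i, 0 < ν i := by
        obtain ⟨i, hi | hi⟩ := hμne
        · exact ⟨μ, hμsum, hμsupp, i, hi⟩
        · refine ⟨-μ, ?_, fun i his => by simp [hμsupp i his], i, by simpa using hi⟩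
          have : ∑ i, (-μ) i • g i = -∑ i, μ i • g i := by
            rw [← Finset.sum_neg_distrib]
            exact Finset.sum_congr rfl fun i _ => by simp [neg_smul]
          rw [this, hμsum, neg_zero]
      -- minimize lam i / ν i over positive ν entries
      set P : Finset ι := Finset.univ.filter (fun i => 0 < ν i) with hP
      have hPne : P.Nonempty := ⟨i₁, by simp [hP, hi₁]⟩
      obtain ⟨i₂, hi₂P, hi₂min⟩ := Finset.exists_min_image P (fun i => lam i / ν i) hPne
      have hνi₂ : 0 < ν i₂ := by simpa [hP] using hi₂P
      set t : ℝ := lam i₂ / ν i₂ with ht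
      have ht0 : 0 ≤ t := div_nonneg (hpos i₂) hνi₂.le
      set lam' : ι → ℝ := fun i => lam i - t * ν i with hlam'
      have hlam'pos : ∀ i, 0 ≤ lam' i := by
        intro i
        by_cases hνi : 0 < ν i
        · have hle : t ≤ lam i / ν i := hi₂min i (by simp [hP, hνi])
          rw [le_div_iff₀ hνi] at hle
          simp only [hlam']; linarith
        · push_neg at hνi
          have : t * ν i ≤ 0 := mul_nonpos_of_nonneg_of_nonpos ht0 hνi
          simp only [hlam']; linarith [hpos i]
      have hlam'sum : ∑ i, lam' i • g i = ∑ i, lam i • g i := by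
        have : ∀ i, lam' i • g i = lam i • g i - t • (ν i • g i) := by
          intro i; simp only [hlam', sub_smul, smul_smul]
        rw [Finset.sum_congr rfl fun i _ => this i, Finset.sum_sub_distrib,
          ← Finset.smul_sum, hνsum, smul_zero, sub_zero]
      have hi₂s : i₂ ∈ s := by
        by_contra h
        exact absurd (hνsupp i₂ h) (ne_of_gt hνi₂)
      have hlam'supp : ∀ i ∉ s.erase i₂, lam' i = 0 := by
        intro i hi
        by_cases hii : i = i₂
        · subst hii
          simp only [hlam', ht]
          field_simp
          ring
        · have his : i ∉ s := by
            intro h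
            exact hi (Finset.mem_erase.mpr ⟨hii, h⟩)
          have h1 : lam i = 0 := by
            by_contra hne
            exact his (by simp [hs, hne])
          have h2 : ν i = 0 := hνsupp i his
          simp [hlam', h1, h2]
      have hcard' : (Finset.univ.filter (fun i => lam' i ≠ 0)).card ≤ N := by
        have hsub : Finset.univ.filter (fun i => lam' i ≠ 0) ⊆ s.erase i₂ := by
          intro i hi
          simp only [Finset.mem_filter] at hi
          by_contra h
          exact hi.2 (hlam'supp i h)
        have := Finset.card_le_card hsub
        rw [Finset.card_erase_of_mem hi₂s] at this
        have hscard : s.card ≤ N + 1 := hcard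
        omega
      obtain ⟨S, hS, lam'', h1, h2, h3⟩ := ih lam' hcard' hlam'pos
      exact ⟨S, hS, lam'', h1, h2, by rw [h3, hlam'sum]⟩

lemma isClosed_coneOf_linIndep {ι : Type*} [Fintype ι] (g : ι → E)
    (h : LinearIndependent ℝ g) : IsClosed (coneOf g) := by
  classical
  let T : (ι → ℝ) →ₗ[ℝ] E :=
    { toFun := fun lam => ∑ i, lam i • g i
      map_add' := by intro a b; simp [add_smul, Finset.sum_add_distrib]
      map_smul' := by intro c a; simp [smul_smul, Finset.smul_sum] }
  have hinj : LinearMap.ker T = ⊥ := by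
    rw [LinearMap.ker_eq_bot']
    intro lam hl
    funext i
    exact Fintype.linearIndependent_iff.mp h lam hl i
  have hemb := LinearMap.isClosedEmbedding_of_injective (𝕜 := ℝ) hinj
  have heq : coneOf g = T '' {lam | ∀ i, 0 ≤ lam i} := by
    ext x; constructor
    · rintro ⟨lam, h1, h2⟩; exact ⟨lam, h1, h2.symm⟩
    · rintro ⟨lam, h1, h2⟩; exact ⟨lam, h1, h2.symm⟩
  rw [heq]
  refine hemb.isClosedMap _ ?_
  have : {lam : ι → ℝ | ∀ i, 0 ≤ lam i} = ⋂ i, (fun lam : ι → ℝ => lam i) ⁻¹' Ici 0 := by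
    ext; simp [Set.mem_iInter]
  rw [this]
  exact isClosed_iInter fun i => isClosed_Ici.preimage (continuous_apply i)

lemma isClosed_coneOf {ι : Type*} [Fintype ι] (g : ι → E) : IsClosed (coneOf g) := by
  classical
  have heq : coneOf g
      = ⋃ S ∈ {S : Finset ι | LinearIndependent ℝ (fun i : {i // i ∈ S} => g i)},
          coneOf (fun i : {i // i ∈ S} => g (i : ι)) := by
    ext x
    simp only [Set.mem_iUnion, Set.mem_setOf_eq]
    constructor
    · rintro ⟨lam, hpos, rfl⟩
      obtain ⟨S, hS, lam', h1, h2, h3⟩ :=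
        caratheodory_cone_aux g (Finset.univ.filter (fun i => lam i ≠ 0)).card lam le_rfl hpos
      refine ⟨S, hS, fun i => lam' i, fun i => h1 i, ?_⟩
      rw [sum_extend S (fun i : {i // i ∈ S} => lam' (i : ι)) g, ← h3]
      refine Finset.sum_congr rfl fun i _ => ?_
      by_cases hi : i ∈ S
      · rw [dif_pos hi]
      · rw [dif_neg hi, h2 i hi]
    · rintro ⟨S, hS, lam, hpos, rfl⟩
      refine ⟨fun i => if h : i ∈ S then lam ⟨i, h⟩ else 0, fun i => ?_, ?_⟩
      · by_cases hi : i ∈ S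
        · simp only [dif_pos hi]; exact hpos _
        · simp only [dif_neg hi]; exact le_refl 0
      · exact sum_extend S lam g
  rw [heq]
  exact Set.Finite.isClosed_biUnion (Set.toFinite _)
    fun S hS => isClosed_coneOf_linIndep _ hS

/-- Farkas' lemma for finitely generated cones. -/
lemma farkas_lemma {ι : Type*} [Fintype ι] (g : ι → E) (u : E)
    (h : ∀ v : E, (∀ i, ⟪g i, v⟫ ≤ 0) → ⟪u, v⟫ ≤ 0) : u ∈ coneOf g := by
  classical
  by_contra hu
  let C : ConvexCone ℝ E :=
    { carrier := coneOf g
      smul_mem' := by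
        rintro c hc x ⟨lam, hpos, rfl⟩
        exact ⟨fun i => c * lam i, fun i => mul_nonneg hc.le (hpos i),
          by rw [Finset.smul_sum]; exact Finset.sum_congr rfl fun i _ => by simp [smul_smul]⟩
      add_mem' := by
        rintro x ⟨lam, hpos, rfl⟩ y ⟨lam', hpos', rfl⟩
        exact ⟨fun i => lam i + lam' i, fun i => add_nonneg (hpos i) (hpos' i),
          by rw [← Finset.sum_add_distrib]; exact Finset.sum_congr rfl fun i _ => by simp [add_smul]⟩ }
  have hne : (C : Set E).Nonempty :=
    ⟨0, ⟨fun _ => 0, fun _ => le_refl 0, by simp⟩⟩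
  have hcl : IsClosed (C : Set E) := isClosed_coneOf g
  obtain ⟨y, hy1, hy2⟩ : ∃ y, (∀ x ∈ C, 0 ≤ ⟪x, y⟫) ∧ ⟪y, u⟫ < 0 := by
    obtain ⟨y, hy1, hy2⟩ := ProperCone.hyperplane_separation'
      ({ toSubmodule := C.toPointedCone
          (⟨fun _ => 0, fun _ => le_refl 0, by simp⟩ : (0 : E) ∈ coneOf g),
         isClosed' := hcl } : ProperCone ℝ E) hu
    exact ⟨y, fun x hx => hy1 x hx, by rw [real_inner_comm]; exact hy2⟩
  have hgi : ∀ i, ⟪g i, -y⟫ ≤ 0 := by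
    intro i
    have hmem : g i ∈ C := by
      refine ⟨fun j => if j = i then 1 else 0, fun j => by positivity, ?_⟩
      simp [ite_smul]
    have := hy1 _ hmem
    rw [inner_neg_right]; linarith
  have h1 := h (-y) hgi
  rw [inner_neg_right] at h1
  rw [real_inner_comm] at hy2
  linarith


end FarkasAux

section TaylorAux

variable {E : Type*} [NormedAddCommGroup E] [InnerProductSpace ℝ E] [CompleteSpace E]

lemma fderiv_eq_inner_gradient (G : E → ℝ) (y v : E) :
    fderiv ℝ G y v = ⟪gradient G y, v⟫ := by
  rw [gradient, InnerProductSpace.toDual_symm_apply]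

lemma taylor_quadratic (G : E → ℝ) (xo : E) (hG : ContDiff ℝ 2 G)
    (H : E →L[ℝ] E) (hH : HasFDerivAt (fun x => gradient G x) H xo)
    (hg0 : gradient G xo = 0) {ε : ℝ} (hε : 0 < ε) :
    ∃ δ > (0 : ℝ), ∀ h : E, ‖h‖ ≤ δ →
      |G (xo + h) - G xo - (1 / 2) * ⟪H h, h⟫| ≤ ε * ‖h‖ ^ 2 := by
  have hdiff : Differentiable ℝ G := hG.differentiable (by norm_num)
  have hlo := (hH.isLittleO).def hε
  rw [Metric.eventually_nhds_iff] at hlo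
  obtain ⟨δ, hδpos, hδ⟩ := hlo
  refine ⟨δ / 2, by linarith, fun h hh => ?_⟩
  set q : ℝ := ⟪H h, h⟫ with hq
  set ψ : ℝ → ℝ := fun t => G (xo + t • h) - t ^ 2 / 2 * q with hψdef
  have hψ : ∀ t : ℝ, HasDerivAt ψ (⟪gradient G (xo + t • h), h⟫ - t * q) t := by
    intro t
    have hline : HasDerivAt (fun t : ℝ => xo + t • h) h t := by
      simpa using ((hasDerivAt_id t).smul_const h).const_add xo
    have hGc : HasDerivAt (fun t : ℝ => G (xo + t • h)) (fderiv ℝ G (xo + t • h) h) t :=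
      (hdiff _).hasFDerivAt.comp_hasDerivAt t hline
    rw [fderiv_eq_inner_gradient] at hGc
    have hquad : HasDerivAt (fun t : ℝ => t ^ 2 / 2 * q) (t * q) t := by
      have := ((hasDerivAt_pow 2 t).div_const 2).mul_const q
      have e : ((↑(2:ℕ) : ℝ) * t ^ (2 - 1) / 2 * q) = t * q := by norm_num
      rw [e] at this
      exact this
    exact hGc.sub hquad
  have hcont : ContinuousOn ψ (Set.Icc 0 1) :=
    (Continuous.continuousOn (by
      have : Continuous fun t : ℝ => G (xo + t • h) :=
        hG.continuous.comp (continuous_const.add (continuous_id.smul continuous_const))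
      exact this.sub ((continuous_pow 2).div_const 2 |>.mul continuous_const)))
  obtain ⟨c, hc, hceq⟩ := exists_hasDerivAt_eq_slope ψ _ (by norm_num : (0:ℝ) < 1)
    hcont (fun x _ => hψ x)
  have hψ1 : ψ 1 = G (xo + h) - 1 / 2 * q := by simp [hψdef]
  have hψ0 : ψ 0 = G xo := by simp [hψdef]
  have hslope : ψ 1 - ψ 0 = ⟪gradient G (xo + c • h), h⟫ - c * q := by
    rw [hceq]; ring
  have herr : ⟪gradient G (xo + c • h), h⟫ - c * q
      = ⟪gradient G (xo + c • h) - gradient G xo - H (c • h), h⟫ := by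
    rw [inner_sub_left, inner_sub_left, hg0, inner_zero_left, map_smul,
      real_inner_smul_left]
    ring
  have hcnorm : ‖c • h‖ ≤ ‖h‖ := by
    rw [norm_smul, Real.norm_eq_abs, abs_of_pos hc.1]
    nlinarith [norm_nonneg h, hc.1, hc.2]
  have hballs : dist (xo + c • h) xo < δ := by
    rw [dist_eq_norm]
    have : xo + c • h - xo = c • h := by abel
    rw [this]
    calc ‖c • h‖ ≤ ‖h‖ := hcnorm
    _ ≤ δ / 2 := hh
    _ < δ := by linarith
  have hb := hδ hballs
  have hsub : xo + c • h - xo = c • h := by abel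
  rw [hsub] at hb
  have hbound : |⟪gradient G (xo + c • h) - gradient G xo - H (c • h), h⟫|
      ≤ ε * ‖h‖ ^ 2 := by
    calc |⟪gradient G (xo + c • h) - gradient G xo - H (c • h), h⟫|
        ≤ ‖gradient G (xo + c • h) - gradient G xo - H (c • h)‖ * ‖h‖ :=
          abs_real_inner_le_norm _ _
      _ ≤ (ε * ‖c • h‖) * ‖h‖ := by
          apply mul_le_mul_of_nonneg_right _ (norm_nonneg h)
          simpa using hb
      _ ≤ (ε * ‖h‖) * ‖h‖ := by
          apply mul_le_mul_of_nonneg_right _ (norm_nonneg h)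
          exact mul_le_mul_of_nonneg_left hcnorm hε.le
      _ = ε * ‖h‖ ^ 2 := by ring
  have : G (xo + h) - G xo - 1 / 2 * q = ψ 1 - ψ 0 := by rw [hψ1, hψ0]; ring
  rw [this, hslope, herr]
  exact hbound


end TaylorAux

lemma ereal_two_mul_le {a : EReal} {r : ℝ} (h : a ≤ (r : EReal)) :
    2 * a ≤ ((2 * r : ℝ) : EReal) := by
  induction a using EReal.rec with
  | bot =>
    have h2 : (2 : EReal) * ⊥ = ⊥ := by
      have : ((2:ℝ) : EReal) * ⊥ = ⊥ := EReal.coe_mul_bot_of_pos two_pos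
      convert this using 2
      rfl
    rw [h2]; exact bot_le
  | coe x =>
    have hx : x ≤ r := EReal.coe_le_coe_iff.mp h
    have : ((2:ℝ) : EReal) * ((x:ℝ) : EReal) = ((2*x : ℝ) : EReal) := by norm_cast
    have h2 : (2 : EReal) * ((x:ℝ) : EReal) = ((2*x : ℝ) : EReal) := by
      convert this using 2
      rfl
    rw [h2]
    exact EReal.coe_le_coe_iff.mpr (by linarith)
  | top => exact absurd h (EReal.coe_lt_top r).not_ge

section ThetaAux

variable {m : ℕ} {Y : Set (Evec m)} {B : Evec m →L[ℝ] Evec m}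

lemma theta_lower {u y : Evec m} (hy : y ∈ Y) :
    ((⟪y, u⟫ - (1 / 2) * ⟪y, B y⟫ : ℝ) : EReal) ≤ thetaY Y B u :=
  le_iSup₂ (f := fun y (_ : y ∈ Y) => ((⟪y, u⟫ - (1 / 2) * ⟪y, B y⟫ : ℝ) : EReal)) y hy

lemma theta_le {u : Evec m} {r : ℝ}
    (h : ∀ y ∈ Y, ⟪y, u⟫ - (1 / 2) * ⟪y, B y⟫ ≤ r) :
    thetaY Y B u ≤ (r : EReal) :=
  iSup₂_le fun y hy => EReal.coe_le_coe_iff.mpr (h y hy)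

lemma theta_upper_Blmo (hBsym : ∀ u v : Evec m, ⟪B u, v⟫ = ⟪u, B v⟫)
    (hBpsd : ∀ u : Evec m, 0 ≤ ⟪u, B u⟫) (lmo : Evec m) :
    thetaY Y B (B lmo) ≤ (((1 / 2) * ⟪lmo, B lmo⟫ : ℝ) : EReal) := by
  refine theta_le fun y hy => ?_
  have h1 := hBpsd (y - lmo)
  have h2 : ⟪y - lmo, B (y - lmo)⟫
      = ⟪y, B y⟫ - ⟪y, B lmo⟫ - ⟪lmo, B y⟫ + ⟪lmo, B lmo⟫ := by
    rw [map_sub, inner_sub_left, inner_sub_right, inner_sub_right]; ring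
  have h3 : ⟪lmo, B y⟫ = ⟪y, B lmo⟫ := by rw [← hBsym, real_inner_comm]
  linarith

lemma theta_finite {lmo zb : Evec m} (hYne : Y.Nonempty)
    (hBsym : ∀ u v : Evec m, ⟪B u, v⟫ = ⟪u, B v⟫)
    (hBpsd : ∀ u : Evec m, 0 ≤ ⟪u, B u⟫)
    (hsub : lmo ∈ subdiff (thetaY Y B) zb) :
    ∃ r : ℝ, thetaY Y B zb = (r : EReal) ∧ r ≤ ⟪lmo, zb⟫ - (1 / 2) * ⟪lmo, B lmo⟫ := by
  obtain ⟨y₀, hy₀⟩ := hYne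
  have hbot : ((⟪y₀, zb⟫ - (1 / 2) * ⟪y₀, B y₀⟫ : ℝ) : EReal) ≤ thetaY Y B zb :=
    theta_lower hy₀
  have hkey := hsub (B lmo)
  have hup := theta_upper_Blmo (Y := Y) hBsym hBpsd lmo
  have hne_top : thetaY Y B zb ≠ ⊤ := by
    intro h
    rw [h] at hkey
    rw [EReal.top_add_coe] at hkey
    exact (EReal.coe_lt_top _).not_ge (hkey.trans hup)
  have hne_bot : thetaY Y B zb ≠ ⊥ := by
    intro h
    rw [h] at hbot
    exact (EReal.bot_lt_coe _).not_ge hbot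
  refine ⟨(thetaY Y B zb).toReal, (EReal.coe_toReal hne_top hne_bot).symm, ?_⟩
  rw [← EReal.coe_toReal hne_top hne_bot] at hkey
  have hc := hkey.trans hup
  rw [← EReal.coe_add, EReal.coe_le_coe_iff] at hc
  have hexp : ⟪lmo, B lmo - zb⟫ = ⟪lmo, B lmo⟫ - ⟪lmo, zb⟫ := inner_sub_right lmo (B lmo) zb
  linarith

lemma Y_closed {p : ℕ} {b : Fin p → Evec m} {c : Fin p → ℝ}
    (hY : Y = {y | ∀ i, ⟪b i, y⟫ ≤ c i}) : IsClosed Y := by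
  have : Y = ⋂ i, ((fun y => ⟪b i, y⟫) ⁻¹' Iic (c i)) := by
    rw [hY]; ext y; simp [Set.mem_iInter]
  rw [this]
  exact isClosed_iInter fun i =>
    isClosed_Iic.preimage (Continuous.inner continuous_const continuous_id)

lemma Y_convex {p : ℕ} {b : Fin p → Evec m} {c : Fin p → ℝ}
    (hY : Y = {y | ∀ i, ⟪b i, y⟫ ≤ c i}) : Convex ℝ Y := by
  rw [hY]
  intro y hy z hz a a' ha ha' haa'
  intro i
  have h1 : ⟪b i, a • y + a' • z⟫ = a * ⟪b i, y⟫ + a' * ⟪b i, z⟫ := by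
    rw [inner_add_right, real_inner_smul_right, real_inner_smul_right]
  rw [h1]
  have hsum : a * c i + a' * c i = c i := by rw [← add_mul, haa', one_mul]
  nlinarith [mul_le_mul_of_nonneg_left (hy i) ha, mul_le_mul_of_nonneg_left (hz i) ha']

lemma lmo_mem_Y {p : ℕ} {b : Fin p → Evec m} {c : Fin p → ℝ}
    (hY : Y = {y | ∀ i, ⟪b i, y⟫ ≤ c i}) {lmo zb : Evec m} {r : ℝ}
    (hθz : thetaY Y B zb = (r : EReal))
    (hsub : lmo ∈ subdiff (thetaY Y B) zb) : lmo ∈ Y := by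
  by_contra hlmo
  obtain ⟨f, u, hfu, hul⟩ :=
    geometric_hahn_banach_closed_point (Y_convex hY) (Y_closed hY) hlmo
  set v := (InnerProductSpace.toDual ℝ (Evec m)).symm f with hvdef
  have hfv : ∀ x : Evec m, ⟪v, x⟫ = f x := fun x => InnerProductSpace.toDual_symm_apply
  have hθv : thetaY Y B (zb + v) ≤ thetaY Y B zb + (u : EReal) := by
    refine iSup₂_le fun y hy => ?_
    have h1 : ⟪y, zb + v⟫ - (1 / 2) * ⟪y, B y⟫
        = (⟪y, zb⟫ - (1 / 2) * ⟪y, B y⟫) + ⟪y, v⟫ := by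
      rw [inner_add_right]; ring
    have h2 : ⟪y, v⟫ ≤ u := by
      rw [real_inner_comm, hfv]; exact (hfu y hy).le
    calc ((⟪y, zb + v⟫ - (1 / 2) * ⟪y, B y⟫ : ℝ) : EReal)
        = ((⟪y, zb⟫ - (1 / 2) * ⟪y, B y⟫ : ℝ) : EReal) + ((⟪y, v⟫ : ℝ) : EReal) := by
          rw [← EReal.coe_add, h1]
      _ ≤ thetaY Y B zb + (u : EReal) :=
          add_le_add (theta_lower hy) (EReal.coe_le_coe_iff.mpr h2)
  have hkey := hsub (zb + v)
  rw [add_sub_cancel_left] at hkey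
  have hc := hkey.trans hθv
  rw [hθz, ← EReal.coe_add, ← EReal.coe_add, EReal.coe_le_coe_iff] at hc
  have h4 : u < ⟪lmo, v⟫ := by
    have h5 : ⟪lmo, v⟫ = f lmo := by rw [real_inner_comm]; exact hfv lmo
    rw [h5]; exact hul
  linarith

lemma tangent_active {p : ℕ} {b : Fin p → Evec m} {c : Fin p → ℝ}
    (hY : Y = {y | ∀ i, ⟪b i, y⟫ ≤ c i}) {lmo v : Evec m}
    (hv : v ∈ bTangentCone Y lmo) :
    ∀ i, ⟪b i, lmo⟫ = c i → ⟪b i, v⟫ ≤ 0 := by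
  intro i hact
  obtain ⟨zs, a, hzs, ha, hz, hlim⟩ := hv
  have hterm : ∀ k, ⟪b i, a k • (zs k - lmo)⟫ ≤ 0 := by
    intro k
    rw [real_inner_smul_right, inner_sub_right]
    have h1 : ⟪b i, zs k⟫ ≤ c i := by
      have := hzs k; rw [hY] at this; exact this i
    have : ⟪b i, zs k⟫ - ⟪b i, lmo⟫ ≤ 0 := by rw [hact]; linarith
    exact mul_nonpos_of_nonneg_of_nonpos (ha k) this
  have hcv : Filter.Tendsto (fun k => ⟪b i, a k • (zs k - lmo)⟫) atTop (𝓝 ⟪b i, v⟫) :=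
    Filter.Tendsto.inner tendsto_const_nhds hlim
  exact le_of_tendsto hcv (Filter.Eventually.of_forall hterm)

lemma step_into_Y {p : ℕ} {b : Fin p → Evec m} {c : Fin p → ℝ}
    (hY : Y = {y | ∀ i, ⟪b i, y⟫ ≤ c i}) {lmo v : Evec m}
    (hlmo : lmo ∈ Y) (hact : ∀ i, ⟪b i, lmo⟫ = c i → ⟪b i, v⟫ ≤ 0) :
    ∃ s₀ > (0 : ℝ), ∀ s : ℝ, 0 ≤ s → s ≤ s₀ → lmo + s • v ∈ Y := by
  have hgen : ∀ F : Finset (Fin p), ∃ s₀ > (0 : ℝ), ∀ s : ℝ, 0 ≤ s → s ≤ s₀ →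
      ∀ i ∈ F, ⟪b i, lmo + s • v⟫ ≤ c i := by
    intro F
    induction F using Finset.induction_on with
    | empty => exact ⟨1, one_pos, fun s _ _ i hi => absurd hi (Finset.notMem_empty i)⟩
    | @insert i F hiF ih =>
      obtain ⟨s₁, hs₁, hs₁p⟩ := ih
      have hexp : ∀ s : ℝ, ⟪b i, lmo + s • v⟫ = ⟪b i, lmo⟫ + s * ⟪b i, v⟫ := by
        intro s; rw [inner_add_right, real_inner_smul_right]
      have hlmoi : ⟪b i, lmo⟫ ≤ c i := by rw [hY] at hlmo; exact hlmo i
      by_cases hbi : ⟪b i, v⟫ ≤ 0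
      · refine ⟨s₁, hs₁, fun s hs0 hss j hj => ?_⟩
        rcases Finset.mem_insert.mp hj with rfl | hj
        · rw [hexp]
          nlinarith
        · exact hs₁p s hs0 hss j hj
      · push_neg at hbi
        have hstrict : ⟪b i, lmo⟫ < c i := by
          rcases lt_or_eq_of_le hlmoi with h | h
          · exact h
          · exact absurd (hact i h) (not_le.mpr hbi)
        set s₂ := (c i - ⟪b i, lmo⟫) / ⟪b i, v⟫ with hs₂def
        have hs₂ : 0 < s₂ := div_pos (by linarith) hbi
        refine ⟨min s₁ s₂, lt_min hs₁ hs₂, fun s hs0 hss j hj => ?_⟩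
        rcases Finset.mem_insert.mp hj with rfl | hj
        · rw [hexp]
          have : s ≤ s₂ := le_trans hss (min_le_right _ _)
          rw [hs₂def, le_div_iff₀ hbi] at this
          linarith
        · exact hs₁p s hs0 (le_trans hss (min_le_left _ _)) j hj
  obtain ⟨s₀, hs₀, hs₀p⟩ := hgen Finset.univ
  refine ⟨s₀, hs₀, fun s hs0 hss => ?_⟩
  rw [hY]
  exact fun i => hs₀p s hs0 hss i (Finset.mem_univ i)

lemma mem_bTangentCone_of_step {lmo v : Evec m} {s₀ : ℝ} (hs₀ : 0 < s₀)
    (hstep : ∀ s : ℝ, 0 ≤ s → s ≤ s₀ → lmo + s • v ∈ Y) :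
    v ∈ bTangentCone Y lmo := by
  refine ⟨fun k => lmo + (s₀ / (k + 1)) • v, fun k => (k + 1) / s₀, ?_, ?_, ?_, ?_⟩
  · intro k
    refine hstep _ (by positivity) ?_
    rw [div_le_iff₀ (by positivity)]
    nlinarith [Nat.cast_nonneg (α := ℝ) k, hs₀]
  · intro k; positivity
  · have h1 : Filter.Tendsto (fun k : ℕ => s₀ / ((k : ℝ) + 1)) atTop (𝓝 0) := by
      have h := (tendsto_const_div_atTop_nhds_zero_nat s₀).comp (tendsto_add_atTop_nat 1)
      have heq : ((fun n : ℕ => s₀ / (n : ℝ)) ∘ fun a => a + 1) = fun k : ℕ => s₀ / ((k : ℝ) + 1) := by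
        funext k; simp only [Function.comp_apply]; push_cast; ring
      rwa [heq] at h
    have h2 : Filter.Tendsto (fun k : ℕ => (s₀ / ((k : ℝ) + 1)) • v) atTop (𝓝 ((0 : ℝ) • v)) :=
      h1.smul_const v
    rw [zero_smul] at h2
    simpa using tendsto_const_nhds.add h2
  · have : ∀ k : ℕ, ((k + 1 : ℝ) / s₀) • ((lmo + (s₀ / (k + 1)) • v) - lmo) = v := by
      intro k
      rw [add_sub_cancel_left, smul_smul]
      have hk : ((k : ℝ) + 1) ≠ 0 := by positivity
      have : (k + 1 : ℝ) / s₀ * (s₀ / (k + 1)) = 1 := by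
        field_simp
      rw [this, one_smul]
    simp_rw [this]
    exact tendsto_const_nhds

end ThetaAux

set_option maxHeartbeats 1000000 in
/-- Quadratic growth and strict local minimality under the second-order sufficient condition. -/
theorem quadratic_growth_of_SOSC {n m : ℕ} (Y : Set (Evec m)) (hYne : Y.Nonempty) (hYpoly : IsPolyhedral Y)
    (B : Evec m →L[ℝ] Evec m) (hBsym : ∀ u v : Evec m, ⟪B u, v⟫ = ⟪u, B v⟫)
    (hBpsd : ∀ u : Evec m, 0 ≤ ⟪u, B u⟫)
    (φ₀ : Evec n → ℝ) (hφ₀ : ContDiff ℝ 2 φ₀)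
    (Φ : Evec n → Evec m) (hΦ : ContDiff ℝ 2 Φ)
    (xo : Evec n) (lmo : Evec m)
    (hkkt1 : gradient (fun x => Lag B φ₀ Φ x lmo) xo = 0)
    (hkkt2 : lmo ∈ subdiff (thetaY Y B) (Φ xo))
    (hsosc : SOSC Y B φ₀ Φ xo lmo) :
    ∃ ε > (0 : ℝ), ∃ ℓ > (0 : ℝ),
      (∀ x ∈ Metric.closedBall xo ε,
        enlpPhi Y B φ₀ Φ xo + ((ℓ * ‖x - xo‖ ^ 2 : ℝ) : EReal) ≤ enlpPhi Y B φ₀ Φ x) ∧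
      ∀ x ∈ Metric.closedBall xo ε, x ≠ xo →
        enlpPhi Y B φ₀ Φ xo < enlpPhi Y B φ₀ Φ x := by
    classical
  obtain ⟨p, b, c, hY⟩ := hYpoly
  obtain ⟨θz, hθz, hθzle⟩ := theta_finite hYne hBsym hBpsd hkkt2
  have hlmoY : lmo ∈ Y := lmo_mem_Y hY hθz hkkt2
  have hphio : enlpPhi Y B φ₀ Φ xo = ((φ₀ xo + θz : ℝ) : EReal) := by
    unfold enlpPhi; rw [hθz, ← EReal.coe_add]
  suffices hgrow : ∃ ε > (0:ℝ), ∃ ℓ > (0:ℝ), ∀ x ∈ Metric.closedBall xo ε,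
      enlpPhi Y B φ₀ Φ xo + ((ℓ * ‖x - xo‖^2 : ℝ) : EReal) ≤ enlpPhi Y B φ₀ Φ x by
    obtain ⟨ε, hε, ℓ, hℓ, hg⟩ := hgrow
    refine ⟨ε, hε, ℓ, hℓ, hg, fun x hx hxne => ?_⟩
    refine lt_of_lt_of_le ?_ (hg x hx)
    rw [hphio, ← EReal.coe_add, EReal.coe_lt_coe_iff]
    have hxx : ‖x - xo‖ ≠ 0 := norm_ne_zero_iff.mpr (sub_ne_zero.mpr hxne)
    have : 0 < ℓ * ‖x - xo‖^2 := by positivity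
    linarith
  by_contra hcon
  push_neg at hcon
  have hseq : ∀ k : ℕ, ∃ x ∈ Metric.closedBall xo (1/((k:ℝ)+1)),
      enlpPhi Y B φ₀ Φ x < enlpPhi Y B φ₀ Φ xo + (((1/((k:ℝ)+1)) * ‖x - xo‖^2 : ℝ) : EReal) := by
    intro k
    exact hcon (1/((k:ℝ)+1)) (by positivity) (1/((k:ℝ)+1)) (by positivity)
  choose xs hball hlt using hseq
  have hne : ∀ k, xs k ≠ xo := by
    intro k hk
    have h := hlt k
    rw [hk] at h
    simp only [sub_self, norm_zero] at h
    have h0 : ((1/((k:ℝ)+1)) * 0^2 : ℝ) = 0 := by ring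
    rw [h0, EReal.coe_zero, add_zero] at h
    exact lt_irrefl _ h
  set t : ℕ → ℝ := fun k => ‖xs k - xo‖ with htdef
  have ht0 : ∀ k, 0 < t k := fun k => norm_pos_iff.mpr (sub_ne_zero.mpr (hne k))
  have htle : ∀ k, t k ≤ 1/((k:ℝ)+1) := by
    intro k
    have := hball k
    rw [Metric.mem_closedBall, dist_eq_norm] at this
    exact this
  have hinv : Filter.Tendsto (fun k : ℕ => 1/((k:ℝ)+1)) atTop (𝓝 0) := by
    have h := (tendsto_const_div_atTop_nhds_zero_nat (1:ℝ)).comp (tendsto_add_atTop_nat 1)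
    have heq : ((fun n : ℕ => (1:ℝ) / (n : ℝ)) ∘ fun a => a + 1) = fun k : ℕ => 1 / ((k : ℝ) + 1) := by
      funext k; simp only [Function.comp_apply]; push_cast; ring
    rwa [heq] at h
  have htlim : Filter.Tendsto t atTop (𝓝 0) :=
    squeeze_zero (fun k => (ht0 k).le) htle hinv
  set w : ℕ → Evec n := fun k => (t k)⁻¹ • (xs k - xo) with hwdef
  have hwnorm : ∀ k, w k ∈ Metric.sphere (0 : Evec n) 1 := by
    intro k
    rw [Metric.mem_sphere, dist_zero_right, norm_smul, norm_inv, Real.norm_eq_abs,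
      abs_of_pos (ht0 k)]
    exact inv_mul_cancel₀ (ne_of_gt (ht0 k))
  clear_value t w
  obtain ⟨wo, hwomem, j, hjmono, hjlim⟩ :=
    (isCompact_sphere (0 : Evec n) 1).tendsto_subseq hwnorm
  have hwn1 : ‖wo‖ = 1 := by
    rw [Metric.mem_sphere, dist_zero_right] at hwomem; exact hwomem
  have hwne : wo ≠ 0 := by intro h; rw [h, norm_zero] at hwn1; norm_num at hwn1
  -- Lagrangian setup
  set G : Evec n → ℝ := fun x => Lag B φ₀ Φ x lmo with hGdef
  have hGC2 : ContDiff ℝ 2 G := by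
    rw [hGdef]; unfold Lag
    exact (hφ₀.add (ContDiff.inner ℝ hΦ contDiff_const)).sub contDiff_const
  have hg0 : gradient G xo = 0 := hkkt1
  set H : Evec n →L[ℝ] Evec n := hessL B φ₀ Φ xo lmo with hHdef
  have hgradeq : (fun x => gradient G x)
      = fun x => ∑ i, (fderiv ℝ G x (EuclideanSpace.single i 1)) • EuclideanSpace.single i 1 := by
    funext x
    ext i
    have h1 : gradient G x i = ⟪gradient G x, EuclideanSpace.single i (1:ℝ)⟫ := by
      rw [real_inner_comm, EuclideanSpace.inner_single_left]
      simp
    rw [h1, ← fderiv_eq_inner_gradient]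
    have hterm : ∀ i' : Fin n,
        (fderiv ℝ G x (EuclideanSpace.single i' 1) • EuclideanSpace.single i' (1:ℝ)) i
          = if i' = i then fderiv ℝ G x (EuclideanSpace.single i' 1) else 0 := by
      intro i'
      by_cases h : i' = i
      · subst h; simp [EuclideanSpace.single_apply]
      · simp only [PiLp.smul_apply, EuclideanSpace.single_apply, smul_eq_mul]
        rw [if_neg (fun hh => h hh.symm), mul_zero, if_neg h]
    rw [WithLp.ofLp_sum, Finset.sum_apply, Finset.sum_congr rfl fun i' _ => hterm i',
      Finset.sum_ite_eq' Finset.univ i (fun i' => fderiv ℝ G x (EuclideanSpace.single i' 1))]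
    simp
  have hgradC1 : ContDiff ℝ 1 fun x => gradient G x := by
    rw [hgradeq]
    have h1 : ContDiff ℝ 1 (fderiv ℝ G) := hGC2.fderiv_right (by norm_num)
    exact ContDiff.sum fun i _ =>
      (((ContinuousLinearMap.apply ℝ ℝ (EuclideanSpace.single i 1)).contDiff).comp h1).smul
        contDiff_const
  have hH : HasFDerivAt (fun x => gradient G x) H xo :=
    ((hgradC1.differentiable (by norm_num)) xo).hasFDerivAt
  set D := fderiv ℝ Φ xo with hDdef
  have hΦdiff : HasFDerivAt Φ D xo := (hΦ.differentiable (by norm_num) xo).hasFDerivAt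
  clear_value H D
  set K := critCone Y B (Φ xo) lmo with hKdef
  have htj : Filter.Tendsto (fun k => t (j k)) atTop (𝓝 0) :=
    htlim.comp hjmono.tendsto_atTop
  have hwj : Filter.Tendsto (fun k => w (j k)) atTop (𝓝 wo) := hjlim
  -- the key inequality
  have hstar : ∀ v ∈ K, ⟪v, D wo⟫ - (1/2) * ⟪v, B v⟫ + (1/2) * ⟪H wo, wo⟫ ≤ 0 := by
    intro v hv
    obtain ⟨s₀, hs₀, hstep⟩ := step_into_Y hY hlmoY (tangent_active hY hv.1)
    have hkey : ∀ ε : ℝ, 0 < ε →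
        (1/2) * ⟪H wo, wo⟫ + ⟪v, D wo⟫ ≤ 2*ε + (1/2) * ⟪v, B v⟫ := by
      intro ε hε
      obtain ⟨δ, hδpos, hδ⟩ := taylor_quadratic G xo hGC2 H hH hg0 hε
      set ε₂ := ε / (‖v‖ + 1) with hε₂def
      have hε₂pos : 0 < ε₂ := by positivity
      have hlo := Asymptotics.isLittleO_iff.mp hΦdiff.isLittleO hε₂pos
      rw [Metric.eventually_nhds_iff] at hlo
      obtain ⟨δ', hδ'pos, hδ'⟩ := hlo
      have hminpos : 0 < min δ (min δ' s₀) := lt_min hδpos (lt_min hδ'pos hs₀)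
      have hev : ∀ᶠ k in atTop, t (j k) < min δ (min δ' s₀) :=
        htj (Iio_mem_nhds hminpos)
      have hineq : ∀ᶠ k in atTop,
          (1/2) * ⟪H (w (j k)), w (j k)⟫ + ⟪v, D (w (j k))⟫ - 1/((k:ℝ)+1)
            ≤ 2*ε + (1/2) * ⟪v, B v⟫ := by
        filter_upwards [hev] with k hk
        set κ := j k with hκ
        have htk := ht0 κ
        have hkδ : t κ ≤ δ := (lt_min_iff.mp hk).1.le
        have hkδ' : t κ < δ' := (lt_min_iff.mp (lt_min_iff.mp hk).2).1
        have hks₀ : t κ ≤ s₀ := (lt_min_iff.mp (lt_min_iff.mp hk).2).2.le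
        have hnorm : ‖xs κ - xo‖ = t κ := by rw [htdef]
        have hxeq : xs κ - xo = t κ • w κ := by
          rw [hwdef]
          rw [htdef]
          exact (smul_inv_smul₀ (ne_of_gt (by rw [htdef] at htk; exact htk)) _).symm
        have hyY : lmo + t κ • v ∈ Y := hstep (t κ) htk.le hks₀
        have hlow : ((φ₀ (xs κ) + (⟪lmo + t κ • v, Φ (xs κ)⟫
              - (1/2) * ⟪lmo + t κ • v, B (lmo + t κ • v)⟫) : ℝ) : EReal)
            ≤ enlpPhi Y B φ₀ Φ (xs κ) := by
          unfold enlpPhi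
          rw [EReal.coe_add]
          exact add_le_add le_rfl (theta_lower hyY)
        have hup : enlpPhi Y B φ₀ Φ xo + ((1/((κ:ℝ)+1) * ‖xs κ - xo‖^2 : ℝ) : EReal)
            = ((φ₀ xo + θz + 1/((κ:ℝ)+1) * ‖xs κ - xo‖^2 : ℝ) : EReal) := by
          rw [hphio, ← EReal.coe_add]
        have hreal : φ₀ (xs κ) + (⟪lmo + t κ • v, Φ (xs κ)⟫
              - (1/2) * ⟪lmo + t κ • v, B (lmo + t κ • v)⟫)
            < φ₀ xo + θz + 1/((κ:ℝ)+1) * t κ^2 := by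
          have h := lt_of_le_of_lt hlow (hlt κ)
          rw [hup, EReal.coe_lt_coe_iff] at h
          rw [hnorm] at h
          exact h
        have htay := hδ (xs κ - xo) (by rw [hnorm]; exact hkδ)
        rw [show xo + (xs κ - xo) = xs κ by abel] at htay
        have hHsq : ⟪H (xs κ - xo), xs κ - xo⟫ = t κ^2 * ⟪H (w κ), w κ⟫ := by
          rw [hxeq, map_smul, real_inner_smul_left, real_inner_smul_right]; ring
        rw [hHsq, hnorm] at htay
        have htay1 := (abs_le.mp htay).1
        have hlin := hδ' (show dist (xs κ) xo < δ' by rw [dist_eq_norm, hnorm]; exact hkδ')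
        have hbase : |⟪v, Φ (xs κ)⟫ - ⟪v, Φ xo⟫ - t κ * ⟪v, D (w κ)⟫| ≤ ε * t κ := by
          have h1 : ⟪v, Φ (xs κ)⟫ - ⟪v, Φ xo⟫ - t κ * ⟪v, D (w κ)⟫
              = ⟪v, Φ (xs κ) - Φ xo - D (xs κ - xo)⟫ := by
            rw [inner_sub_right, inner_sub_right, hxeq, map_smul, real_inner_smul_right]
          rw [h1]
          have hv1 : ‖v‖ * ε₂ ≤ ε := by
            have hc : ε₂ * (‖v‖ + 1) = ε := div_mul_cancel₀ ε (by positivity)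
            nlinarith [hε₂pos.le]
          calc |⟪v, Φ (xs κ) - Φ xo - D (xs κ - xo)⟫|
              ≤ ‖v‖ * ‖Φ (xs κ) - Φ xo - D (xs κ - xo)‖ := abs_real_inner_le_norm _ _
            _ ≤ ‖v‖ * (ε₂ * t κ) := by
                apply mul_le_mul_of_nonneg_left _ (norm_nonneg v)
                rw [hnorm] at hlin
                exact hlin
            _ ≤ ε * t κ := by nlinarith [mul_le_mul_of_nonneg_right hv1 htk.le]
        have hmul2 := mul_le_mul_of_nonneg_left (abs_le.mp hbase).1 htk.le
        have e1 : ⟪lmo + t κ • v, Φ (xs κ)⟫ = ⟪lmo, Φ (xs κ)⟫ + t κ * ⟪v, Φ (xs κ)⟫ := by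
          rw [inner_add_left, real_inner_smul_left]
        have e2 : ⟪lmo + t κ • v, B (lmo + t κ • v)⟫
            = ⟪lmo, B lmo⟫ + 2*(t κ)*⟪v, B lmo⟫ + (t κ)^2*⟪v, B v⟫ := by
          rw [map_add, map_smul, inner_add_left, inner_add_right, inner_add_right,
            real_inner_smul_left, real_inner_smul_left, real_inner_smul_right,
            real_inner_smul_right]
          have hsw : ⟪lmo, B v⟫ = ⟪v, B lmo⟫ := by rw [← hBsym, real_inner_comm]
          rw [hsw]; ring
        have e5 : ⟪v, Φ xo⟫ = ⟪v, B lmo⟫ := by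
          have h0 : ⟪Φ xo - B lmo, v⟫ = 0 := hv.2
          rw [inner_sub_left] at h0
          have c1 : ⟪v, Φ xo⟫ = ⟪Φ xo, v⟫ := real_inner_comm _ _
          have c2 : ⟪v, B lmo⟫ = ⟪B lmo, v⟫ := real_inner_comm _ _
          linarith
        have eGx : G (xs κ) = φ₀ (xs κ) + ⟪lmo, Φ (xs κ)⟫ - (1/2) * ⟪lmo, B lmo⟫ := by
          show Lag B φ₀ Φ (xs κ) lmo = _
          unfold Lag
          rw [show ⟪Φ (xs κ), lmo⟫ = ⟪lmo, Φ (xs κ)⟫ from real_inner_comm _ _]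
        have eGo : G xo = φ₀ xo + ⟪lmo, Φ xo⟫ - (1/2) * ⟪lmo, B lmo⟫ := by
          show Lag B φ₀ Φ xo lmo = _
          unfold Lag
          rw [show ⟪Φ xo, lmo⟫ = ⟪lmo, Φ xo⟫ from real_inner_comm _ _]
        have hjk : 1/((κ:ℝ)+1) ≤ 1/((k:ℝ)+1) := by
          apply one_div_le_one_div_of_le (by positivity)
          have h : k ≤ j k := hjmono.le_apply
          have : (k:ℝ) ≤ (κ:ℝ) := by rw [hκ]; exact_mod_cast h
          linarith
        have hjk2 := mul_le_mul_of_nonneg_right hjk (sq_nonneg (t κ))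
        have e5T : t κ * ⟪v, Φ xo⟫ = t κ * ⟪v, B lmo⟫ := by rw [e5]
        by_contra hno
        push_neg at hno
        have hmul := mul_lt_mul_of_pos_left hno (pow_pos htk 2)
        linarith [hreal, htay1, hmul2, e1, e2, e5T, eGx, eGo, hθzle, hjk2, hmul]

      have hlhs : Filter.Tendsto
          (fun k => (1/2) * ⟪H (w (j k)), w (j k)⟫ + ⟪v, D (w (j k))⟫ - 1/((k:ℝ)+1)) atTop
          (𝓝 ((1/2) * ⟪H wo, wo⟫ + ⟪v, D wo⟫ - 0)) := by
        refine Filter.Tendsto.sub (Filter.Tendsto.add ?_ ?_) hinv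
        · exact tendsto_const_nhds.mul
            (Filter.Tendsto.inner ((H.continuous.tendsto wo).comp hwj) hwj)
        · exact Filter.Tendsto.inner tendsto_const_nhds ((D.continuous.tendsto wo).comp hwj)
      have hfin := le_of_tendsto hlhs hineq
      rw [sub_zero] at hfin
      exact hfin
    by_contra hno
    push_neg at hno
    have hS := hkey ((⟪v, D wo⟫ - (1/2) * ⟪v, B v⟫ + (1/2) * ⟪H wo, wo⟫)/4) (by linarith)
    linarith
  -- polar cone membership via Farkas
  have hker : ∀ u : Evec m, u ∈ K → B u = 0 → ⟪u, D wo⟫ ≤ 0 := by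
    intro u hu hBu
    by_contra hp
    push_neg at hp
    have hb : ∀ τ : ℝ, 0 < τ → τ * ⟪u, D wo⟫ ≤ -((1/2) * ⟪H wo, wo⟫) := by
      intro τ hτ
      have hmem : τ • u ∈ K := by
        refine ⟨?_, ?_⟩
        · obtain ⟨zs, a, h1, h2, h3, h4⟩ := hu.1
          exact ⟨zs, fun k => τ * a k, h1, fun k => mul_nonneg hτ.le (h2 k), h3,
            by simpa [smul_smul] using h4.const_smul τ⟩
        · show ⟪Φ xo - B lmo, τ • u⟫ = 0
          rw [real_inner_smul_right]
          have : ⟪Φ xo - B lmo, u⟫ = 0 := hu.2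
          rw [this, mul_zero]
      have h5 := hstar (τ • u) hmem
      rw [real_inner_smul_left, map_smul, hBu, smul_zero, inner_zero_right] at h5
      linarith
    have hτpos : 0 < (|(-((1/2) * ⟪H wo, wo⟫))| + 1)/⟪u, D wo⟫ := by positivity
    have h6 := hb _ hτpos
    rw [div_mul_cancel₀ _ (ne_of_gt hp)] at h6
    have := le_abs_self (-((1/2) * ⟪H wo, wo⟫))
    linarith
  have hDmem : D wo ∈ polarCone K + Set.range (⇑B) := by
    set g : (Fin p ⊕ (Bool ⊕ (Fin m ⊕ Fin m))) → Evec m :=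
      Sum.elim (fun i => if ⟪b i, lmo⟫ = c i then b i else 0)
        (Sum.elim (fun bb => cond bb (Φ xo - B lmo) (-(Φ xo - B lmo)))
          (Sum.elim (fun j => B (EuclideanSpace.single j 1))
            (fun j => -(B (EuclideanSpace.single j 1))))) with hg
    have hhyp : ∀ u : Evec m, (∀ α, ⟪g α, u⟫ ≤ 0) → ⟪D wo, u⟫ ≤ 0 := by
      intro u hu
      have hact : ∀ i, ⟪b i, lmo⟫ = c i → ⟪b i, u⟫ ≤ 0 := by
        intro i hi
        have h1 := hu (Sum.inl i)
        simp only [hg, Sum.elim_inl] at h1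
        rwa [if_pos hi] at h1
      obtain ⟨s₁, hs₁, hstep₁⟩ := step_into_Y hY hlmoY hact
      have huT : u ∈ bTangentCone Y lmo := mem_bTangentCone_of_step hs₁ hstep₁
      have hud : ⟪Φ xo - B lmo, u⟫ = 0 := by
        have h1 := hu (Sum.inr (Sum.inl true))
        have h2 := hu (Sum.inr (Sum.inl false))
        simp only [hg, Sum.elim_inr, Sum.elim_inl, cond] at h1 h2
        rw [inner_neg_left] at h2
        linarith
      have hBu : B u = 0 := by
        have hco : ∀ i, ⟪B (EuclideanSpace.single i 1), u⟫ = 0 := by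
          intro i
          have h1 := hu (Sum.inr (Sum.inr (Sum.inl i)))
          have h2 := hu (Sum.inr (Sum.inr (Sum.inr i)))
          simp only [hg, Sum.elim_inr, Sum.elim_inl] at h1 h2
          rw [inner_neg_left] at h2
          linarith
        ext i
        have h3 : ⟪EuclideanSpace.single i (1:ℝ), B u⟫ = 0 := by
          rw [← hBsym]; exact hco i
        rw [EuclideanSpace.inner_single_left] at h3
        simpa using h3
      have h4 := hker u ⟨huT, hud⟩ hBu
      rwa [real_inner_comm]
    obtain ⟨lam, hlam, hsum⟩ := farkas_lemma g (D wo) hhyp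
    rw [Fintype.sum_sum_type, Fintype.sum_sum_type, Fintype.sum_sum_type] at hsum
    rw [Fintype.sum_bool] at hsum
    set P : Evec m := (∑ i, lam (Sum.inl i) • g (Sum.inl i))
      + (lam (Sum.inr (Sum.inl true)) • g (Sum.inr (Sum.inl true))
        + lam (Sum.inr (Sum.inl false)) • g (Sum.inr (Sum.inl false))) with hP
    set qv : Evec m := (∑ i, lam (Sum.inr (Sum.inr (Sum.inl i))) • EuclideanSpace.single i 1)
      - (∑ i, lam (Sum.inr (Sum.inr (Sum.inr i))) • EuclideanSpace.single i 1) with hqv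
    have hBqv : B qv
        = (∑ i, lam (Sum.inr (Sum.inr (Sum.inl i))) • g (Sum.inr (Sum.inr (Sum.inl i))))
          + (∑ i, lam (Sum.inr (Sum.inr (Sum.inr i))) • g (Sum.inr (Sum.inr (Sum.inr i)))) := by
      simp only [hqv, hg, Sum.elim_inr, Sum.elim_inl, map_sub, map_sum, map_smul, smul_neg,
        Finset.sum_neg_distrib]
      abel
    have hPmem : P ∈ polarCone K := by
      intro vK hvK
      have hdv : ⟪Φ xo - B lmo, vK⟫ = 0 := hvK.2
      have hb0 : ∀ i, ⟪lam (Sum.inl i) • g (Sum.inl i), vK⟫ ≤ 0 := by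
        intro i
        rw [real_inner_smul_left]
        apply mul_nonpos_of_nonneg_of_nonpos (hlam _)
        by_cases hi : ⟪b i, lmo⟫ = c i
        · simp only [hg, Sum.elim_inl, if_pos hi]
          exact tangent_active hY hvK.1 i hi
        · simp only [hg, Sum.elim_inl, if_neg hi, inner_zero_left]
          exact le_refl 0
      have hsum0 : ⟪∑ i, lam (Sum.inl i) • g (Sum.inl i), vK⟫ ≤ 0 := by
        rw [sum_inner]
        exact Finset.sum_nonpos fun i _ => hb0 i
      have htrue : ⟪lam (Sum.inr (Sum.inl true)) • g (Sum.inr (Sum.inl true)), vK⟫ = 0 := by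
        rw [real_inner_smul_left]
        simp only [hg, Sum.elim_inr, Sum.elim_inl, cond]
        rw [hdv, mul_zero]
      have hfalse : ⟪lam (Sum.inr (Sum.inl false)) • g (Sum.inr (Sum.inl false)), vK⟫ = 0 := by
        rw [real_inner_smul_left]
        simp only [hg, Sum.elim_inr, Sum.elim_inl, cond]
        rw [inner_neg_left, hdv]
        ring
      rw [hP, inner_add_left, inner_add_left, htrue, hfalse]
      linarith
    refine Set.mem_add.mpr ⟨P, hPmem, B qv, ⟨qv, rfl⟩, ?_⟩
    rw [hBqv, hP, hsum]
    abel
  -- final contradiction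
  have hθK : thetaY K B (D wo) ≤ ((-((1/2) * ⟪H wo, wo⟫) : ℝ) : EReal) :=
    theta_le fun v hv => by linarith [hstar v hv]
  have hDmem' := hDmem
  rw [hDdef] at hDmem'
  have hcon2 := hsosc wo hwne hDmem'
  rw [← hDdef, ← hHdef, ← hKdef] at hcon2
  have h2a : 2 * thetaY K B (D wo) ≤ ((-(⟪H wo, wo⟫) : ℝ) : EReal) := by
    have := ereal_two_mul_le hθK
    convert this using 2
    ring
  have hfin : ((⟪H wo, wo⟫ : ℝ) : EReal) + 2 * thetaY K B (D wo) ≤ 0 := by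
    calc ((⟪H wo, wo⟫ : ℝ) : EReal) + 2 * thetaY K B (D wo)
        ≤ ((⟪H wo, wo⟫ : ℝ) : EReal) + ((-(⟪H wo, wo⟫) : ℝ) : EReal) :=
          add_le_add le_rfl h2a
      _ = (((⟪H wo, wo⟫ + -(⟪H wo, wo⟫)) : ℝ) : EReal) := by rw [EReal.coe_add]
      _ = ((0:ℝ) : EReal) := by norm_num
      _ = 0 := EReal.coe_zero
  exact absurd (lt_of_lt_of_le hcon2 hfin) (lt_irrefl 0)
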